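/- Let n = 2m ≥ 4 and let x and y be involutions of W(D̃_n), both of labelled cycle type (m, 0, 0, 0). Then x and y are conjugate in W(D̃_n) if and only if minus(x) ≡ minus(y) (mod 4) and f(x) ≡ f(y) (mod 4). Consequently the involutions of labelled cycle type (m, 0, 0, 0) form exactly four conjugacy classes of W(D̃_n). -/

import Mathlib

noncomputable section

open Equiv Finset

/-- Points `±1, …, ±n`, encoded as a sign together with an index. -/
abbrev Pt (n : ℕ) := ℤˣ × Fin n

/-- Negation of a point. -/
def negPt {n : ℕ} (x : Pt n) : Pt n := (-x.1, x.2)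

/-- The hyperoctahedral group `H_n` of signed permutations: bijections `σ` of `{±1,…,±n}`
with `σ(-i) = -σ(i)`. -/
def Hgrp (n : ℕ) : Subgroup (Equiv.Perm (Pt n)) where
  carrier := {σ | ∀ x, σ (negPt x) = negPt (σ x)}
  one_mem' := fun _ => rfl
  mul_mem' := by
    intro σ τ hσ hτ x
    have hσ' : ∀ y, σ (negPt y) = negPt (σ y) := hσ
    have hτ' : ∀ y, τ (negPt y) = negPt (τ y) := hτ
    simp only [Equiv.Perm.mul_apply]
    rw [hτ' x, hσ' (τ x)]
  inv_mem' := by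
    intro σ hσ x
    have hσ' : ∀ y, σ (negPt y) = negPt (σ y) := hσ
    apply σ.injective
    have hinv : ∀ z, σ (σ⁻¹ z) = z := fun z => σ.apply_symm_apply z
    rw [hinv, hσ', hinv]

lemma Hgrp_apply {n : ℕ} {σ : Equiv.Perm (Pt n)} (hσ : σ ∈ Hgrp n) (δ : ℤˣ) (k : Fin n) :
    σ (δ, k) = (δ * (σ (1, k)).1, (σ (1, k)).2) := by
  have hσ' : ∀ y, σ (negPt y) = negPt (σ y) := hσ
  rcases Int.units_eq_one_or δ with h | h <;> subst h
  · simp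
  · have h2 := hσ' (1, k)
    simp only [negPt] at h2
    simpa using h2

/-- The (right) action of a signed permutation on integer vectors:
`(v^σ)_j = ε·v_i` whenever `σ(i) = ε j`. -/
def actV {n : ℕ} (σ : Equiv.Perm (Pt n)) (v : Fin n → ℤ) : Fin n → ℤ :=
  fun j => ((σ (1, j)).1 : ℤ) * v (σ (1, j)).2

lemma actV_add {n : ℕ} (σ : Equiv.Perm (Pt n)) (a b : Fin n → ℤ) :
    actV σ (a + b) = actV σ a + actV σ b := by
  funext j; simp [actV, mul_add]

lemma actV_zero {n : ℕ} (σ : Equiv.Perm (Pt n)) : actV σ 0 = 0 := by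
  funext j; simp [actV]

lemma actV_neg {n : ℕ} (σ : Equiv.Perm (Pt n)) (v : Fin n → ℤ) :
    actV σ (-v) = -actV σ v := by
  funext j; simp [actV]

lemma actV_one {n : ℕ} (v : Fin n → ℤ) : actV 1 v = v := by
  funext j; simp [actV]

lemma actV_mul {n : ℕ} {σ : Equiv.Perm (Pt n)} (hσ : σ ∈ Hgrp n) (τ : Equiv.Perm (Pt n))
    (v : Fin n → ℤ) : actV (σ * τ) v = actV τ (actV σ v) := by
  funext j
  have h := Hgrp_apply hσ (τ (1, j)).1 (τ (1, j)).2
  rw [Prod.mk.eta] at h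
  simp only [actV, Equiv.Perm.mul_apply, h]
  push_cast
  ring

/-- The affine Weyl group of type `C̃ₙ`: pairs `(σ, v)` with `σ` a signed permutation and
`v ∈ ℤⁿ`, with multiplication `(σ,v)(τ,u) = (στ, v^τ + u)`. -/
@[ext] structure WC (n : ℕ) where
  sigma : Hgrp n
  vec : Fin n → ℤ

namespace WC

variable {n : ℕ}

instance : Mul (WC n) :=
  ⟨fun x y => ⟨x.sigma * y.sigma, actV (y.sigma : Equiv.Perm (Pt n)) x.vec + y.vec⟩⟩

instance : One (WC n) := ⟨⟨1, 0⟩⟩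

instance : Inv (WC n) :=
  ⟨fun x => ⟨x.sigma⁻¹, -actV ((x.sigma⁻¹ : Hgrp n) : Equiv.Perm (Pt n)) x.vec⟩⟩

@[simp] lemma mul_sigma (x y : WC n) : (x * y).sigma = x.sigma * y.sigma := rfl
@[simp] lemma mul_vec (x y : WC n) :
    (x * y).vec = actV (y.sigma : Equiv.Perm (Pt n)) x.vec + y.vec := rfl
@[simp] lemma one_sigma : (1 : WC n).sigma = 1 := rfl
@[simp] lemma one_vec : (1 : WC n).vec = 0 := rfl
@[simp] lemma inv_sigma (x : WC n) : (x⁻¹).sigma = x.sigma⁻¹ := rfl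
@[simp] lemma inv_vec (x : WC n) :
    (x⁻¹).vec = -actV ((x.sigma⁻¹ : Hgrp n) : Equiv.Perm (Pt n)) x.vec := rfl

instance : Group (WC n) where
  mul_assoc a b c := by
    refine WC.ext ?_ ?_
    · exact mul_assoc _ _ _
    · show actV (c.sigma : Equiv.Perm (Pt n))
          (actV (b.sigma : Equiv.Perm (Pt n)) a.vec + b.vec) + c.vec
        = actV (((b.sigma * c.sigma : Hgrp n)) : Equiv.Perm (Pt n)) a.vec
          + (actV (c.sigma : Equiv.Perm (Pt n)) b.vec + c.vec)
      rw [actV_add]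
      have hc : (((b.sigma * c.sigma : Hgrp n)) : Equiv.Perm (Pt n))
          = (b.sigma : Equiv.Perm (Pt n)) * (c.sigma : Equiv.Perm (Pt n)) := rfl
      rw [hc, actV_mul b.sigma.2]
      abel
  one_mul a := by
    refine WC.ext (one_mul _) ?_
    show actV (a.sigma : Equiv.Perm (Pt n)) 0 + a.vec = a.vec
    rw [actV_zero, zero_add]
  mul_one a := by
    refine WC.ext (mul_one _) ?_
    show actV ((1 : Hgrp n) : Equiv.Perm (Pt n)) a.vec + 0 = a.vec
    have h1 : ((1 : Hgrp n) : Equiv.Perm (Pt n)) = 1 := rfl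
    rw [h1, actV_one, add_zero]
  inv_mul_cancel a := by
    refine WC.ext (inv_mul_cancel _) ?_
    show actV (a.sigma : Equiv.Perm (Pt n))
        (-actV ((a.sigma⁻¹ : Hgrp n) : Equiv.Perm (Pt n)) a.vec) + a.vec = 0
    rw [actV_neg, ← actV_mul (a.sigma⁻¹ : Hgrp n).2]
    have h1 : ((a.sigma⁻¹ : Hgrp n) : Equiv.Perm (Pt n)) * (a.sigma : Equiv.Perm (Pt n)) = 1 := by
      rw [← Subgroup.coe_mul, inv_mul_cancel, Subgroup.coe_one]
    rw [h1, actV_one, neg_add_cancel]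

end WC

/-- `Σw`: the coordinate sum of the translation part. -/
def sumV {n : ℕ} (x : WC n) : ℤ := ∑ i, x.vec i

/-- `minus(w)`: the number of `i ∈ {1,…,n}` with `σ(i) < 0`. -/
def minusCard {n : ℕ} (x : WC n) : ℕ :=
  (Finset.univ.filter fun i : Fin n => ((x.sigma : Equiv.Perm (Pt n)) (1, i)).1 = -1).card
lemma permOf_bij {n : ℕ} (σ : Hgrp n) :
    Function.Bijective (fun i : Fin n => ((σ : Equiv.Perm (Pt n)) (1, i)).2) := by
  rw [Fintype.bijective_iff_injective_and_card]
  refine ⟨?_, rfl⟩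
  intro i j hij
  simp only at hij
  have hmem : ∀ y, (σ : Equiv.Perm (Pt n)) (negPt y) = negPt ((σ : Equiv.Perm (Pt n)) y) := σ.2
  by_cases h1 : ((σ : Equiv.Perm (Pt n)) (1, i)).1 = ((σ : Equiv.Perm (Pt n)) (1, j)).1
  · have heq : (σ : Equiv.Perm (Pt n)) (1, i) = (σ : Equiv.Perm (Pt n)) (1, j) :=
      Prod.ext h1 hij
    have h2 := (σ : Equiv.Perm (Pt n)).injective heq
    exact congrArg Prod.snd h2
  · exfalso
    have hfst : ((σ : Equiv.Perm (Pt n)) (1, i)).1 = -((σ : Equiv.Perm (Pt n)) (1, j)).1 := by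
      rcases Int.units_eq_one_or ((σ : Equiv.Perm (Pt n)) (1, i)).1 with ha | ha <;>
        rcases Int.units_eq_one_or ((σ : Equiv.Perm (Pt n)) (1, j)).1 with hb | hb <;>
        first
          | exact absurd (ha.trans hb.symm) h1
          | simp [ha, hb]
    have hne : (σ : Equiv.Perm (Pt n)) (1, i) = negPt ((σ : Equiv.Perm (Pt n)) (1, j)) :=
      Prod.ext hfst hij
    rw [← hmem (1, j)] at hne
    have h3 := (σ : Equiv.Perm (Pt n)).injective hne
    have h4 := congrArg Prod.fst h3
    simp only [negPt] at h4
    exact absurd h4 (by decide)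

/-- The underlying (unsigned) permutation of `{1,…,n}` induced by a signed permutation. -/
def permOf {n : ℕ} (σ : Hgrp n) : Equiv.Perm (Fin n) :=
  Equiv.ofBijective _ (permOf_bij σ)

@[simp] lemma permOf_apply {n : ℕ} (σ : Hgrp n) (i : Fin n) :
    permOf σ i = ((σ : Equiv.Perm (Pt n)) (1, i)).2 := rfl

lemma unitsCast_zmod2 (ε : ℤˣ) : (((ε : ℤ) : ZMod 2)) = 1 := by
  rcases Int.units_eq_one_or ε with h | h <;> subst h <;> decide

lemma sumV_mul {n : ℕ} (x y : WC n) :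
    ((sumV (x * y) : ℤ) : ZMod 2) = ((sumV x : ℤ) : ZMod 2) + ((sumV y : ℤ) : ZMod 2) := by
  have key : ∀ (σ : Hgrp n) (v : Fin n → ℤ),
      (∑ i, ((actV (σ : Equiv.Perm (Pt n)) v i : ℤ) : ZMod 2)) = ∑ i, ((v i : ℤ) : ZMod 2) := by
    intro σ v
    have hterm : ∀ i, ((actV (σ : Equiv.Perm (Pt n)) v i : ℤ) : ZMod 2)
        = ((v (permOf σ i) : ℤ) : ZMod 2) := by
      intro i
      show ((((((σ : Equiv.Perm (Pt n)) (1, i)).1 : ℤ)) * v (((σ : Equiv.Perm (Pt n)) (1, i)).2) : ℤ) : ZMod 2) = _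
      push_cast
      rw [unitsCast_zmod2, one_mul]
      rfl
    rw [Finset.sum_congr rfl (fun i _ => hterm i)]
    exact Equiv.sum_comp (permOf σ) (fun i => ((v i : ℤ) : ZMod 2))
  have hvec : (x * y).vec = actV (y.sigma : Equiv.Perm (Pt n)) x.vec + y.vec := rfl
  unfold sumV
  rw [hvec]
  have hsplit : (∑ i, (actV (y.sigma : Equiv.Perm (Pt n)) x.vec + y.vec) i)
      = (∑ i, actV (y.sigma : Equiv.Perm (Pt n)) x.vec i) + ∑ i, y.vec i := by
    rw [← Finset.sum_add_distrib]; rfl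
  rw [hsplit]
  push_cast
  rw [key y.sigma x.vec]

lemma minusCard_one {n : ℕ} : minusCard (1 : WC n) = 0 := by
  unfold minusCard
  rw [Finset.card_eq_zero, Finset.filter_eq_empty_iff]
  intro i _
  show ¬ (((1 : Hgrp n) : Equiv.Perm (Pt n)) (1, i)).1 = -1
  simp only [OneMemClass.coe_one, Equiv.Perm.one_apply]
  decide

lemma ite_units_mul (u w : ℤˣ) :
    ((if u * w = -1 then (1 : ZMod 2) else 0)) =
      (if u = -1 then (1 : ZMod 2) else 0) + (if w = -1 then (1 : ZMod 2) else 0) := by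
  rcases Int.units_eq_one_or u with h | h <;> rcases Int.units_eq_one_or w with h' | h' <;>
    subst h <;> subst h' <;> decide

lemma minusCard_mul {n : ℕ} (x y : WC n) :
    ((minusCard (x * y) : ℕ) : ZMod 2) = (minusCard x : ZMod 2) + (minusCard y : ZMod 2) := by
  have hσ : ∀ i : Fin n, ((x * y).sigma : Equiv.Perm (Pt n)) (1, i)
      = (x.sigma : Equiv.Perm (Pt n)) ((y.sigma : Equiv.Perm (Pt n)) (1, i)) := fun i => rfl
  unfold minusCard
  rw [Finset.card_filter, Finset.card_filter, Finset.card_filter]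
  push_cast
  have step : ∀ i : Fin n,
      ((if (((x * y).sigma : Equiv.Perm (Pt n)) (1, i)).1 = -1 then (1 : ZMod 2) else 0))
      = (if ((y.sigma : Equiv.Perm (Pt n)) (1, i)).1 = -1 then (1 : ZMod 2) else 0)
        + (if ((x.sigma : Equiv.Perm (Pt n)) (1, permOf y.sigma i)).1 = -1
            then (1 : ZMod 2) else 0) := by
    intro i
    rw [hσ i]
    have h := Hgrp_apply x.sigma.2 ((y.sigma : Equiv.Perm (Pt n)) (1, i)).1
      ((y.sigma : Equiv.Perm (Pt n)) (1, i)).2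
    rw [Prod.mk.eta] at h
    rw [h]
    exact ite_units_mul _ _
  calc (∑ i : Fin n, if (((x * y).sigma : Equiv.Perm (Pt n)) (1, i)).1 = -1
          then (1 : ZMod 2) else 0)
      = ∑ i : Fin n, ((if ((y.sigma : Equiv.Perm (Pt n)) (1, i)).1 = -1 then (1 : ZMod 2) else 0)
        + (if ((x.sigma : Equiv.Perm (Pt n)) (1, permOf y.sigma i)).1 = -1
            then (1 : ZMod 2) else 0)) := Finset.sum_congr rfl (fun i _ => step i)
    _ = (∑ i : Fin n, if ((y.sigma : Equiv.Perm (Pt n)) (1, i)).1 = -1 then (1 : ZMod 2) else 0)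
        + ∑ i : Fin n, (if ((x.sigma : Equiv.Perm (Pt n)) (1, permOf y.sigma i)).1 = -1
            then (1 : ZMod 2) else 0) := Finset.sum_add_distrib
    _ = (∑ i : Fin n, if ((x.sigma : Equiv.Perm (Pt n)) (1, i)).1 = -1 then (1 : ZMod 2) else 0)
        + ∑ i : Fin n, (if ((y.sigma : Equiv.Perm (Pt n)) (1, i)).1 = -1
            then (1 : ZMod 2) else 0) := by
          rw [add_comm]
          congr 1
          exact Equiv.sum_comp (permOf y.sigma)
            (fun k => if ((x.sigma : Equiv.Perm (Pt n)) (1, k)).1 = -1 then (1 : ZMod 2) else 0)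
lemma even_int_iff_zmod {a : ℤ} : Even a ↔ ((a : ZMod 2) = 0) := by
  rw [ZMod.intCast_zmod_eq_zero_iff_dvd a 2, Int.even_iff]
  push_cast
  omega

lemma sumV_one {n : ℕ} : sumV (1 : WC n) = 0 := by simp [sumV]

/-- The affine Weyl group of type `B̃ₙ`: the elements `w` of `W(C̃ₙ)` with `Σw` even. -/
def WB (n : ℕ) : Subgroup (WC n) where
  carrier := {w | Even (sumV w)}
  one_mem' := by
    show Even (sumV (1 : WC n))
    rw [sumV_one]
    exact ⟨0, by simp⟩
  mul_mem' := by
    intro a b ha hb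
    have ha' : ((sumV a : ℤ) : ZMod 2) = 0 := even_int_iff_zmod.mp ha
    have hb' : ((sumV b : ℤ) : ZMod 2) = 0 := even_int_iff_zmod.mp hb
    refine even_int_iff_zmod.mpr ?_
    rw [sumV_mul, ha', hb', add_zero]
  inv_mem' := by
    intro a ha
    have ha' : ((sumV a : ℤ) : ZMod 2) = 0 := even_int_iff_zmod.mp ha
    refine even_int_iff_zmod.mpr ?_
    have h1 := sumV_mul a⁻¹ a
    rw [inv_mul_cancel, sumV_one, ha', add_zero] at h1
    simpa using h1.symm

lemma intModEq_two_iff {a b : ℤ} : a ≡ b [ZMOD 2] ↔ ((a : ZMod 2) = (b : ZMod 2)) :=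
  (ZMod.intCast_eq_intCast_iff a b 2).symm

/-- The second copy `B̄(B̃ₙ)` of the affine Weyl group of type `B̃ₙ` inside `W(C̃ₙ)`:
elements with `Σw ≡ minus(w) (mod 2)`. -/
def Bbar (n : ℕ) : Subgroup (WC n) where
  carrier := {w | sumV w ≡ (minusCard w : ℤ) [ZMOD 2]}
  one_mem' := by
    show sumV (1 : WC n) ≡ ((minusCard (1 : WC n) : ℤ)) [ZMOD 2]
    rw [sumV_one, minusCard_one]
    rfl
  mul_mem' := by
    intro a b ha hb
    have ha' := intModEq_two_iff.mp ha
    have hb' := intModEq_two_iff.mp hb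
    refine intModEq_two_iff.mpr ?_
    rw [sumV_mul, ha', hb']
    push_cast at ha' hb' ⊢
    rw [minusCard_mul]
  inv_mem' := by
    intro a ha
    have ha' := intModEq_two_iff.mp ha
    refine intModEq_two_iff.mpr ?_
    have h1 := sumV_mul a⁻¹ a
    have h2 := minusCard_mul a⁻¹ a
    rw [inv_mul_cancel, sumV_one] at h1
    rw [inv_mul_cancel, minusCard_one] at h2
    push_cast at ha' h1 h2 ⊢
    linear_combination h1.symm - h2.symm - ha'

/-- The affine Weyl group of type `D̃ₙ`, as the intersection of the two `B̃ₙ`'s. -/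
def WD (n : ℕ) : Subgroup (WC n) := WB n ⊓ Bbar n

instance : DecidablePred (fun k : ℤ => Even k) := fun _ => decidable_of_iff _ Int.even_iff.symm
instance : DecidablePred (fun k : ℤ => Odd k) := fun _ => decidable_of_iff _ Int.odd_iff.symm

/-- The labelled cycle type `(m, k_e, k_o, l)` of an element of `W(C̃ₙ)` (intended for
involutions): `m` is the number of 2-cycles of `σ`, `k_e` (resp. `k_o`) is the number of
`i` with `σ(i) = -i` whose label `v_i` is even (resp. odd), and `l` is the number of fixed
points of `σ`. -/
def lct {n : ℕ} (x : WC n) : ℕ × ℕ × ℕ × ℕ :=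
  ((Finset.univ.filter fun i : Fin n => ((x.sigma : Equiv.Perm (Pt n)) (1, i)).2 ≠ i).card / 2,
   (Finset.univ.filter fun i : Fin n =>
      (x.sigma : Equiv.Perm (Pt n)) (1, i) = (-1, i) ∧ Even (x.vec i)).card,
   (Finset.univ.filter fun i : Fin n =>
      (x.sigma : Equiv.Perm (Pt n)) (1, i) = (-1, i) ∧ Odd (x.vec i)).card,
   (Finset.univ.filter fun i : Fin n => (x.sigma : Equiv.Perm (Pt n)) (1, i) = (1, i)).card)

/-- `f(x)`: twice the sum of the labels over one chosen entry of each 2-cycle (we choose the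
entry with the smaller index), plus the sum of the labels over the negative 1-cycles.  Only
its residue modulo 4 is ever used, and for involutions that residue does not depend on the
choice of entries. -/
def fval {n : ℕ} (x : WC n) : ℤ :=
  2 * (∑ i ∈ Finset.univ.filter
        (fun i : Fin n => i < ((x.sigma : Equiv.Perm (Pt n)) (1, i)).2), x.vec i)
  + ∑ i ∈ Finset.univ.filter
      (fun i : Fin n => (x.sigma : Equiv.Perm (Pt n)) (1, i) = (-1, i)), x.vec i

/-- The commuting graph on a set `X` of elements of a group: vertices are the elements
of `X`, and distinct vertices are adjacent exactly when they commute.  When `X` is a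
conjugacy class of involutions this is the commuting involution graph `C(G,X)`. -/
def commGraph {M : Type*} [Group M] (X : Set M) : SimpleGraph X where
  Adj a b := a ≠ b ∧ (a : M) * (b : M) = (b : M) * (a : M)
  symm := ⟨fun a b h => ⟨h.1.symm, h.2.symm⟩⟩
  loopless := ⟨fun a h => h.1 rfl⟩

/-- The conjugacy class of `x` under conjugation by a subgroup `G`. -/
def ConjugacyClassOf {M : Type*} [Group M] (G : Subgroup M) (x : M) : Set M :=
  {y | ∃ g ∈ G, g⁻¹ * x * g = y}

/-- `X` is a conjugacy class of involutions of the subgroup `G`. -/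
def IsInvolutionConjClass {M : Type*} [Group M] (G : Subgroup M) (X : Set M) : Prop :=
  ∃ x ∈ G, orderOf x = 2 ∧ X = ConjugacyClassOf G x

/-- Sign change at the single coordinate `k`. -/
def negAt {n : ℕ} (k : Fin n) : Equiv.Perm (Pt n) :=
  Function.Involutive.toPerm (fun p => if p.2 = k then (-p.1, p.2) else p) (by
    intro p
    by_cases h : p.2 = k <;> simp [h, Prod.ext_iff])

lemma negAt_mem {n : ℕ} (k : Fin n) : negAt k ∈ Hgrp n := by
  intro p
  show (if (negPt p).2 = k then (-(negPt p).1, (negPt p).2) else negPt p)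
      = negPt (if p.2 = k then (-p.1, p.2) else p)
  by_cases h : p.2 = k <;> simp [negPt, h]

/-- The positive transposition of the coordinates `a` and `b`. -/
def swapPos {n : ℕ} (a b : Fin n) : Equiv.Perm (Pt n) :=
  Equiv.prodCongr (Equiv.refl ℤˣ) (Equiv.swap a b)

lemma swapPos_mem {n : ℕ} (a b : Fin n) : swapPos a b ∈ Hgrp n := fun _ => rfl

/-- The negative transposition of the coordinates `a` and `b` (for `a ≠ b` it sends
`a ↦ -b` and `b ↦ -a`). -/
def negSwap {n : ℕ} (a b : Fin n) : Equiv.Perm (Pt n) := negAt b * negAt a * swapPos a b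

lemma negSwap_mem {n : ℕ} (a b : Fin n) : negSwap a b ∈ Hgrp n :=
  mul_mem (mul_mem (negAt_mem b) (negAt_mem a)) (swapPos_mem a b)

/-- Constructor for elements of `W(C̃ₙ)`. -/
def mkW {n : ℕ} (σ : Equiv.Perm (Pt n)) (h : σ ∈ Hgrp n) (v : Fin n → ℤ) : WC n := ⟨⟨σ, h⟩, v⟩

/-- The simple reflection `r₁ = (σ, 0)` with `σ(1) = -1` (take `k = 0`); more generally
`(σ, 0)` with `σ(k) = -k`. -/
def rFirstGen (n : ℕ) (k : Fin n) : WC n := mkW (negAt k) (negAt_mem k) 0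

/-- The simple reflections `rᵢ = (σ, 0)`, `2 ≤ i ≤ n`, where `σ` exchanges `a` and `b`
positively (take `a, b` adjacent). -/
def swapGen (n : ℕ) (a b : Fin n) : WC n := mkW (swapPos a b) (swapPos_mem a b) 0

/-- The simple reflection `r_{n+1} = (σ, eₙ)` with `σ(n) = -n` (take `k = n-1`). -/
def rLastGen (n : ℕ) (k : Fin n) : WC n := mkW (negAt k) (negAt_mem k) (Pi.single k 1)

/-- The reflections `s = (σ, e_{n-1} + eₙ)` (take `a = n-2`, `b = n-1`) and
`t = (σ, e₁ + e₂)` (take `a = 0`, `b = 1`), where `σ(a) = -b`, `σ(b) = -a`. -/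
def negSwapGen (n : ℕ) (a b : Fin n) : WC n :=
  mkW (negSwap a b) (negSwap_mem a b) (Pi.single a 1 + Pi.single b 1)

/-- The projection `π : W(C̃ₙ) → Hₙ`, `(σ, v) ↦ σ`. -/
def projHom (n : ℕ) : WC n →* Equiv.Perm (Pt n) where
  toFun x := (x.sigma : Equiv.Perm (Pt n))
  map_one' := rfl
  map_mul' _ _ := rfl

/-- The action of a signed permutation on real vectors. -/
def actR {n : ℕ} (σ : Equiv.Perm (Pt n)) (u : Fin n → ℝ) : Fin n → ℝ :=
  fun j => (((σ (1, j)).1 : ℤ) : ℝ) * u (σ (1, j)).2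

/-- The affine action of `w = (σ,v) ∈ W(C̃ₙ)` on `ℝⁿ`: `u ↦ u^σ + v`. -/
def affAct {n : ℕ} (x : WC n) : (Fin n → ℝ) → (Fin n → ℝ) :=
  fun u => actR (x.sigma : Equiv.Perm (Pt n)) u + fun i => ((x.vec i : ℤ) : ℝ)

/-- The affine involution `φ` of `ℝⁿ` with `φ(u)ᵢ = 1/2 - u_{n+1-i}`. -/
def phiR (n : ℕ) : (Fin n → ℝ) → (Fin n → ℝ) := fun u i => 1 / 2 - u i.rev

section Dev

variable {n : ℕ}

/-- The sign of `σ(i)`. -/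
def sgn (x : WC n) (i : Fin n) : ℤˣ := ((x.sigma : Equiv.Perm (Pt n)) (1, i)).1

/-- The underlying permutation. -/
def prm (x : WC n) : Equiv.Perm (Fin n) := permOf x.sigma

lemma sigma_apply_one (x : WC n) (i : Fin n) :
    (x.sigma : Equiv.Perm (Pt n)) (1, i) = (sgn x i, prm x i) := rfl

/-- Fixed-point-free signed involutions (labelled cycle type `(m,0,0,0)`). -/
def Good (x : WC n) : Prop := x * x = 1 ∧ ∀ i, prm x i ≠ i

lemma Good.sq {x : WC n} (h : Good x) : x * x = 1 := h.1
lemma Good.fpf {x : WC n} (h : Good x) : ∀ i, prm x i ≠ i := h.2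

lemma Good.sigma_sigma {x : WC n} (h : Good x) (p : Pt n) :
    (x.sigma : Equiv.Perm (Pt n)) ((x.sigma : Equiv.Perm (Pt n)) p) = p := by
  have h1 : (x * x).sigma = (1 : WC n).sigma := congrArg WC.sigma h.1
  have h2 : x.sigma * x.sigma = 1 := h1
  have h3 : (x.sigma : Equiv.Perm (Pt n)) * (x.sigma : Equiv.Perm (Pt n)) = 1 := by
    rw [← Subgroup.coe_mul, h2, Subgroup.coe_one]
  have := congrFun (congrArg (fun (e : Equiv.Perm (Pt n)) => (e : Pt n → Pt n)) h3) p
  simpa using this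

lemma Good.key {x : WC n} (h : Good x) (i : Fin n) :
    (sgn x i * sgn x (prm x i), prm x (prm x i)) = ((1 : ℤˣ), i) := by
  have h1 := h.sigma_sigma (1, i)
  rw [sigma_apply_one] at h1
  rw [Hgrp_apply x.sigma.2 (sgn x i) (prm x i)] at h1
  rw [sigma_apply_one] at h1
  rw [Prod.ext_iff] at h1
  exact Prod.ext h1.1 h1.2

lemma Good.prm_prm {x : WC n} (h : Good x) (i : Fin n) : prm x (prm x i) = i :=
  (Prod.ext_iff.mp (h.key i)).2

lemma Good.sgn_prm {x : WC n} (h : Good x) (i : Fin n) : sgn x (prm x i) = sgn x i := by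
  have h1 : sgn x i * sgn x (prm x i) = 1 := (Prod.ext_iff.mp (h.key i)).1
  rcases Int.units_eq_one_or (sgn x i) with hs | hs <;>
    rcases Int.units_eq_one_or (sgn x (prm x i)) with ht | ht <;>
      rw [hs, ht] at h1 ⊢ <;> first | rfl | simp at h1

lemma Good.vec_prm {x : WC n} (h : Good x) (i : Fin n) :
    ((sgn x i : ℤˣ) : ℤ) * x.vec (prm x i) = - x.vec i := by
  have h1 : (x * x).vec = (1 : WC n).vec := congrArg WC.vec h.1
  have h2 : actV (x.sigma : Equiv.Perm (Pt n)) x.vec + x.vec = 0 := h1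
  have h3 := congrFun h2 i
  have h4 : actV (x.sigma : Equiv.Perm (Pt n)) x.vec i
      = ((sgn x i : ℤˣ) : ℤ) * x.vec (prm x i) := rfl
  simp only [Pi.add_apply, Pi.zero_apply] at h3
  rw [h4] at h3
  linarith

lemma Good.vec_prm_parity {x : WC n} (h : Good x) (i : Fin n) :
    ((x.vec (prm x i) : ℤ) : ZMod 2) = ((x.vec i : ℤ) : ZMod 2) := by
  have h1 := congrArg (fun a : ℤ => (a : ZMod 2)) (h.vec_prm i)
  simp only [Int.cast_mul, Int.cast_neg] at h1
  rw [unitsCast_zmod2, one_mul] at h1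
  rw [h1, CharTwo.neg_eq]

/-- The canonical transversal of the 2-cycles: the smaller entries. -/
def trv (x : WC n) : Finset (Fin n) := Finset.univ.filter (fun i => i < prm x i)

lemma mem_trv_iff {x : WC n} (h : Good x) (i : Fin n) :
    i ∈ trv x ↔ prm x i ∉ trv x := by
  simp only [trv, Finset.mem_filter, Finset.mem_univ, true_and, h.prm_prm i]
  have := h.fpf i
  constructor
  · intro h1 h2; exact absurd (lt_trans h1 h2) (lt_irrefl i)
  · intro h1
    rcases lt_trichotomy i (prm x i) with h2 | h2 | h2
    · exact h2
    · exact absurd h2.symm this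
    · exact absurd h2 h1

end Dev
section Dev2

variable {n : ℕ}

lemma sum_transversal (π : Equiv.Perm (Fin n)) (w : Fin n → ZMod 2)
    (hw : ∀ i, w (π i) = w i) (R R' : Finset (Fin n))
    (hR : ∀ i, i ∈ R ↔ π i ∉ R) (hR' : ∀ i, i ∈ R' ↔ π i ∉ R')
    (hπ : ∀ i, π (π i) = i) :
    ∑ i ∈ R', w i = ∑ i ∈ R, w i := by
  rw [← Finset.sum_inter_add_sum_sdiff R' R w, ← Finset.sum_inter_add_sum_sdiff R R' w,
    Finset.inter_comm]
  congr 1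
  refine Finset.sum_nbij' (fun i => π i) (fun i => π i) ?_ ?_ ?_ ?_ ?_
  · intro a ha
    rw [Finset.mem_sdiff] at ha ⊢
    constructor
    · by_contra hc
      exact absurd ((hR a).mpr hc) ha.2
    · exact (hR' a).mp ha.1
  · intro a ha
    rw [Finset.mem_sdiff] at ha ⊢
    constructor
    · by_contra hc
      exact absurd ((hR' a).mpr hc) ha.2
    · exact (hR a).mp ha.1
  · intro a _; exact hπ a
  · intro a _; exact hπ a
  · intro a _; exact (hw a).symm

/-- Number of negative 2-cycles, as a finset of transversal representatives. -/
def negSet (x : WC n) : Finset (Fin n) := (trv x).filter (fun i => sgn x i = -1)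

/-- Parity of the number of negative 2-cycles. -/
def Nv (x : WC n) : ZMod 2 := ((negSet x).card : ZMod 2)

/-- Sum of one label from each 2-cycle. -/
def Sv (x : WC n) : ℤ := ∑ i ∈ trv x, x.vec i

/-- Parity of the number of 2-cycles with odd labels. -/
def Ov (x : WC n) : ZMod 2 := ∑ i ∈ trv x, ((x.vec i : ℤ) : ZMod 2)

lemma Ov_eq_cast_Sv (x : WC n) : Ov x = ((Sv x : ℤ) : ZMod 2) := by
  unfold Ov Sv
  push_cast
  rfl

lemma Nv_eq_sum (x : WC n) :
    Nv x = ∑ i ∈ trv x, (if sgn x i = -1 then (1 : ZMod 2) else 0) := by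
  unfold Nv negSet
  rw [Finset.card_filter]
  push_cast
  rfl

lemma minusCard_eq_two_mul {x : WC n} (h : Good x) :
    minusCard x = 2 * (negSet x).card := by
  have hsplit : Finset.univ.filter (fun i : Fin n => sgn x i = -1)
      = (negSet x) ∪ ((Finset.univ.filter (fun i : Fin n => sgn x i = -1)) \ (trv x)) := by
    ext i
    simp only [negSet, Finset.mem_union, Finset.mem_filter, Finset.mem_sdiff, Finset.mem_univ,
      true_and, trv]
    tauto
  have hmc : minusCard x = (Finset.univ.filter (fun i : Fin n => sgn x i = -1)).card := rfl
  have hdisj : Disjoint (negSet x)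
      ((Finset.univ.filter (fun i : Fin n => sgn x i = -1)) \ (trv x)) := by
    refine Finset.disjoint_left.mpr ?_
    intro a ha hb
    rw [Finset.mem_sdiff] at hb
    exact hb.2 (Finset.mem_of_mem_filter a ha)
  have hcard : ((Finset.univ.filter (fun i : Fin n => sgn x i = -1)) \ (trv x)).card
      = (negSet x).card := by
    refine Finset.card_bij' (fun i _ => prm x i) (fun i _ => prm x i) ?_ ?_ ?_ ?_
    · intro a ha
      rw [Finset.mem_sdiff, Finset.mem_filter] at ha
      simp only [negSet, Finset.mem_filter]
      refine ⟨?_, ?_⟩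
      · by_contra hc
        exact absurd ((mem_trv_iff h a).mpr hc) ha.2
      · rw [h.sgn_prm a]; exact ha.1.2
    · intro a ha
      simp only [negSet, Finset.mem_filter] at ha
      rw [Finset.mem_sdiff, Finset.mem_filter]
      exact ⟨⟨Finset.mem_univ _, by rw [h.sgn_prm a]; exact ha.2⟩, (mem_trv_iff h a).mp ha.1⟩
    · intro a _; exact h.prm_prm a
    · intro a _; exact h.prm_prm a
  rw [hmc, hsplit, Finset.card_union_of_disjoint hdisj, hcard]
  ring

lemma fval_eq_two_mul {x : WC n} (h : Good x) : fval x = 2 * Sv x := by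
  have h1 : (Finset.univ.filter
      (fun i : Fin n => (x.sigma : Equiv.Perm (Pt n)) (1, i) = (-1, i))) = ∅ := by
    rw [Finset.filter_eq_empty_iff]
    intro i _
    rw [sigma_apply_one]
    intro hc
    exact h.fpf i (congrArg Prod.snd hc)
  unfold fval
  rw [h1, Finset.sum_empty, add_zero]
  rfl

lemma sum_univ_split {x : WC n} (h : Good x) (w : Fin n → ZMod 2)
    (hw : ∀ i, w (prm x i) = w i) :
    ∑ i : Fin n, w i = 0 := by
  have hsplit := Finset.sum_filter_add_sum_filter_not Finset.univ
    (fun i : Fin n => i < prm x i) w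
  have h2 : ∑ i ∈ Finset.univ.filter (fun i : Fin n => ¬ i < prm x i), w i
      = ∑ i ∈ trv x, w i := by
    refine Finset.sum_nbij' (fun i => prm x i) (fun i => prm x i) ?_ ?_ ?_ ?_ ?_
    · intro a ha
      rw [Finset.mem_filter] at ha
      by_contra hc
      rw [mem_trv_iff h, h.prm_prm a] at hc
      simp only [trv, Finset.mem_filter, Finset.mem_univ, true_and, not_not] at hc
      exact ha.2 hc
    · intro a ha
      rw [Finset.mem_filter]
      refine ⟨Finset.mem_univ _, ?_⟩
      rw [mem_trv_iff h] at ha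
      simp only [trv, Finset.mem_filter, Finset.mem_univ, true_and, h.prm_prm a] at ha ⊢
      exact ha
    · intro a _; exact h.prm_prm a
    · intro a _; exact h.prm_prm a
    · intro a _; exact (hw a).symm
  have htrv : ∑ i ∈ Finset.univ.filter (fun i : Fin n => i < prm x i), w i
      = ∑ i ∈ trv x, w i := rfl
  rw [htrv, h2] at hsplit
  rw [← hsplit]
  rw [← two_mul]
  rw [show (2 : ZMod 2) = 0 by decide, zero_mul]

lemma Good.sumV_zmod {x : WC n} (h : Good x) : ((sumV x : ℤ) : ZMod 2) = 0 := by
  have : ((sumV x : ℤ) : ZMod 2) = ∑ i : Fin n, ((x.vec i : ℤ) : ZMod 2) := by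
    unfold sumV; push_cast; rfl
  rw [this]
  exact sum_univ_split h _ (fun i => h.vec_prm_parity i)

lemma Good.minusCard_zmod {x : WC n} (h : Good x) : ((minusCard x : ℕ) : ZMod 2) = 0 := by
  rw [minusCard_eq_two_mul h]
  push_cast
  rw [show (2 : ZMod 2) = 0 by decide, zero_mul]

lemma Good.mem_WD {x : WC n} (h : Good x) : x ∈ WD n := by
  constructor
  · show Even (sumV x)
    exact even_int_iff_zmod.mpr h.sumV_zmod
  · show sumV x ≡ (minusCard x : ℤ) [ZMOD 2]
    rw [intModEq_two_iff, h.sumV_zmod]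
    have : (((minusCard x : ℕ) : ℤ) : ZMod 2) = ((minusCard x : ℕ) : ZMod 2) := by push_cast; rfl
    rw [this, h.minusCard_zmod]

end Dev2
section Dev3

variable {n : ℕ}

/-- A pure translation. -/
def trg (u : Fin n → ℤ) : WC n := ⟨1, u⟩

/-- Lift of an unsigned permutation. -/
def LP (π : Equiv.Perm (Fin n)) : Equiv.Perm (Pt n) := Equiv.prodCongr (Equiv.refl ℤˣ) π

lemma LP_mem (π : Equiv.Perm (Fin n)) : LP π ∈ Hgrp n := fun _ => rfl

lemma LP_mul (π ρ : Equiv.Perm (Fin n)) : LP (π * ρ) = LP π * LP ρ := rfl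

lemma LP_one : LP (1 : Equiv.Perm (Fin n)) = 1 := rfl

/-- Sign changes on a finite set of coordinates. -/
def dSet (A : Finset (Fin n)) : Equiv.Perm (Pt n) :=
  Function.Involutive.toPerm (fun p => if p.2 ∈ A then (-p.1, p.2) else p) (by
    intro p
    by_cases h : p.2 ∈ A <;> simp [h, Prod.ext_iff])

lemma dSet_apply (A : Finset (Fin n)) (δ : ℤˣ) (i : Fin n) :
    dSet A (δ, i) = (if i ∈ A then -δ else δ, i) := by
  show (if (δ, i).2 ∈ A then (-(δ, i).1, (δ, i).2) else (δ, i)) = _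
  by_cases h : i ∈ A <;> simp [h]

lemma dSet_mem (A : Finset (Fin n)) : dSet A ∈ Hgrp n := by
  intro p
  obtain ⟨δ, i⟩ := p
  show dSet A (-δ, i) = negPt (dSet A (δ, i))
  rw [dSet_apply, dSet_apply]
  by_cases h : i ∈ A <;> simp [negPt, h]

lemma dSet_inv (A : Finset (Fin n)) : (dSet A)⁻¹ = dSet A := rfl

/-- Sign-change generators of `W(C̃ₙ)`. -/
def dg (A : Finset (Fin n)) : WC n := ⟨⟨dSet A, dSet_mem A⟩, 0⟩

/-- Lifted permutations inside `W(C̃ₙ)`. -/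
def lpg (π : Equiv.Perm (Fin n)) : WC n := ⟨⟨LP π, LP_mem π⟩, 0⟩

lemma mk_mul_mk_zero (σ τ : Hgrp n) : ((⟨σ, 0⟩ : WC n) * ⟨τ, 0⟩ : WC n) = ⟨σ * τ, 0⟩ := by
  refine WC.ext rfl ?_
  show actV (τ : Equiv.Perm (Pt n)) 0 + 0 = 0
  rw [actV_zero, add_zero]

lemma lpg_mul (π ρ : Equiv.Perm (Fin n)) : lpg (π * ρ) = lpg π * lpg ρ := by
  unfold lpg
  rw [mk_mul_mk_zero]
  rfl

lemma lpg_one : lpg (1 : Equiv.Perm (Fin n)) = 1 := by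
  refine WC.ext ?_ rfl
  exact Subtype.ext LP_one

lemma conj_zero (σ : Hgrp n) (x : WC n) :
    (⟨σ, 0⟩ : WC n)⁻¹ * x * ⟨σ, 0⟩
      = ⟨σ⁻¹ * x.sigma * σ, actV (σ : Equiv.Perm (Pt n)) x.vec⟩ := by
  refine WC.ext ?_ ?_
  · show ((⟨σ, 0⟩ : WC n)⁻¹.sigma * x.sigma) * σ = σ⁻¹ * x.sigma * σ
    rfl
  · show actV (σ : Equiv.Perm (Pt n))
        (actV (x.sigma : Equiv.Perm (Pt n)) ((⟨σ, 0⟩ : WC n)⁻¹.vec) + x.vec) + 0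
      = actV (σ : Equiv.Perm (Pt n)) x.vec
    have h1 : ((⟨σ, 0⟩ : WC n)⁻¹.vec) = 0 := by
      show -actV ((σ⁻¹ : Hgrp n) : Equiv.Perm (Pt n)) 0 = 0
      rw [actV_zero, neg_zero]
    rw [h1, actV_zero, zero_add, add_zero]

lemma conj_trg (u : Fin n → ℤ) (x : WC n) :
    (trg u)⁻¹ * x * trg u
      = ⟨x.sigma, x.vec + u - actV (x.sigma : Equiv.Perm (Pt n)) u⟩ := by
  refine WC.ext ?_ ?_
  · show ((trg u)⁻¹.sigma * x.sigma) * (1 : Hgrp n) = x.sigma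
    have : (trg u)⁻¹.sigma = 1 := by
      show ((1 : Hgrp n))⁻¹ = 1
      exact inv_one
    rw [this, one_mul, mul_one]
  · show actV (((trg u).sigma : Hgrp n) : Equiv.Perm (Pt n))
        (actV (x.sigma : Equiv.Perm (Pt n)) ((trg u)⁻¹.vec) + x.vec) + u
      = x.vec + u - actV (x.sigma : Equiv.Perm (Pt n)) u
    have h0 : (((trg u).sigma : Hgrp n) : Equiv.Perm (Pt n)) = 1 := rfl
    have h1 : ((trg u)⁻¹.vec) = -u := by
      show -actV (((1 : Hgrp n)⁻¹ : Hgrp n) : Equiv.Perm (Pt n)) u = -u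
      have : (((1 : Hgrp n)⁻¹ : Hgrp n) : Equiv.Perm (Pt n)) = 1 := by
        rw [inv_one]; rfl
      rw [this, actV_one]
    rw [h0, h1, actV_one, actV_neg]
    abel

end Dev3
section Dev4

variable {n : ℕ}

lemma sum_trv_prm {x : WC n} (h : Good x) (w : Fin n → ZMod 2) :
    ∑ i ∈ trv x, (w i + w (prm x i)) = ∑ i : Fin n, w i := by
  rw [Finset.sum_add_distrib]
  have h2 : ∑ i ∈ trv x, w (prm x i)
      = ∑ i ∈ Finset.univ.filter (fun i : Fin n => ¬ i < prm x i), w i := by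
    refine Finset.sum_nbij' (fun i => prm x i) (fun i => prm x i) ?_ ?_ ?_ ?_ ?_
    · intro a ha
      rw [Finset.mem_filter]
      refine ⟨Finset.mem_univ _, ?_⟩
      rw [mem_trv_iff h] at ha
      simp only [trv, Finset.mem_filter, Finset.mem_univ, true_and, h.prm_prm a] at ha ⊢
      exact ha
    · intro a ha
      rw [Finset.mem_filter] at ha
      simp only [trv, Finset.mem_filter, Finset.mem_univ, true_and, h.prm_prm a]
      rcases lt_trichotomy (prm x a) a with h2 | h2 | h2
      · exact h2
      · exact absurd h2 (h.fpf a)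
      · exact absurd h2 ha.2
    · intro a _; exact h.prm_prm a
    · intro a _; exact h.prm_prm a
    · intro a _; rfl
  rw [h2]
  have h3 := Finset.sum_filter_add_sum_filter_not Finset.univ (fun i : Fin n => i < prm x i) w
  exact h3

/-- The key conjugation property. -/
def Pg (g : WC n) : Prop := ∀ x : WC n, Good x →
  Good (g⁻¹ * x * g) ∧ Nv (g⁻¹ * x * g) = Nv x + ((minusCard g : ℕ) : ZMod 2)
    ∧ Ov (g⁻¹ * x * g) = Ov x + ((sumV g : ℤ) : ZMod 2)

lemma conj_sq {x : WC n} (h : x * x = 1) (g : WC n) :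
    (g⁻¹ * x * g) * (g⁻¹ * x * g) = 1 := by
  have e : (g⁻¹ * x * g) * (g⁻¹ * x * g) = g⁻¹ * (x * x) * g := by group
  rw [e, h, mul_one, inv_mul_cancel]

lemma Pg_one : Pg (1 : WC n) := by
  intro x hx
  rw [inv_one, one_mul, mul_one]
  refine ⟨hx, ?_, ?_⟩ <;> simp [minusCard_one, sumV_one]

lemma Pg_mul {g h : WC n} (hg : Pg g) (hh : Pg h) : Pg (g * h) := by
  intro x hx
  have e : (g * h)⁻¹ * x * (g * h) = h⁻¹ * (g⁻¹ * x * g) * h := by group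
  obtain ⟨hG, hN, hO⟩ := hg x hx
  obtain ⟨hG2, hN2, hO2⟩ := hh _ hG
  rw [e]
  refine ⟨hG2, ?_, ?_⟩
  · rw [hN2, hN, minusCard_mul]; ring
  · rw [hO2, hO, sumV_mul]; ring

lemma minusCard_sigma {g : WC n} (hg : ∀ i : Fin n, sgn g i = 1) : minusCard g = 0 := by
  unfold minusCard
  rw [Finset.card_eq_zero, Finset.filter_eq_empty_iff]
  intro i _
  show ¬ ((g.sigma : Equiv.Perm (Pt n)) (1, i)).1 = -1
  have := hg i
  rw [sigma_apply_one] at *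
  simp only [this]
  decide

lemma sgn_trg (u : Fin n → ℤ) (i : Fin n) : sgn (trg u) i = 1 := rfl

lemma Pg_trg (u : Fin n → ℤ) : Pg (trg u) := by
  intro x hx
  have hconj := conj_trg u x
  have hGood : Good ((trg u)⁻¹ * x * trg u) := by
    refine ⟨conj_sq hx.sq _, ?_⟩
    rw [hconj]
    exact fun i => hx.fpf i
  refine ⟨hGood, ?_, ?_⟩
  · rw [minusCard_sigma (sgn_trg u), hconj]
    have : Nv (⟨x.sigma, x.vec + u - actV (x.sigma : Equiv.Perm (Pt n)) u⟩ : WC n)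
        = Nv x := rfl
    rw [this]
    simp
  · rw [hconj]
    have hOv : Ov (⟨x.sigma, x.vec + u - actV (x.sigma : Equiv.Perm (Pt n)) u⟩ : WC n)
        = ∑ i ∈ trv x,
            (((x.vec i + u i - actV (x.sigma : Equiv.Perm (Pt n)) u i : ℤ) : ZMod 2)) := rfl
    rw [hOv]
    have hpt : ∀ i ∈ trv x,
        (((x.vec i + u i - actV (x.sigma : Equiv.Perm (Pt n)) u i : ℤ) : ZMod 2))
          = ((x.vec i : ℤ) : ZMod 2)
            + (((u i : ℤ) : ZMod 2) + ((u (prm x i) : ℤ) : ZMod 2)) := by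
      intro i _
      have hact : actV (x.sigma : Equiv.Perm (Pt n)) u i
          = ((sgn x i : ℤˣ) : ℤ) * u (prm x i) := rfl
      rw [hact]
      push_cast
      rw [unitsCast_zmod2, one_mul]
      ring_nf
      rw [CharTwo.sub_eq_add]
    rw [Finset.sum_congr rfl hpt, Finset.sum_add_distrib,
      sum_trv_prm hx (fun i => ((u i : ℤ) : ZMod 2))]
    have hsum : ((sumV (trg u) : ℤ) : ZMod 2) = ∑ i : Fin n, ((u i : ℤ) : ZMod 2) := by
      unfold sumV trg
      push_cast
      rfl
    rw [hsum]
    rfl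

end Dev4
section Dev4b

variable {n : ℕ}

lemma ite_sgn_flip (p q : Prop) [Decidable p] [Decidable q] (ε : ℤˣ) :
    (if (if p then (-1 : ℤˣ) else 1) * ε * (if q then -1 else 1) = -1
        then (1 : ZMod 2) else 0)
    = (if ε = -1 then 1 else 0) + ((if p then 1 else 0) + (if q then 1 else 0)) := by
  rcases Int.units_eq_one_or ε with h | h <;> subst h <;>
    by_cases hp : p <;> by_cases hq : q <;>
      simp [hp, hq] <;> decide

lemma sum_ind_card (A : Finset (Fin n)) :
    ∑ i : Fin n, (if i ∈ A then (1 : ZMod 2) else 0) = (A.card : ZMod 2) := by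
  rw [Finset.sum_ite_mem, Finset.univ_inter, Finset.sum_const, nsmul_eq_mul, mul_one]

lemma dg_sigma_apply (A : Finset (Fin n)) (x : WC n) (i : Fin n) :
    ((((⟨dSet A, dSet_mem A⟩ : Hgrp n)⁻¹ * x.sigma * ⟨dSet A, dSet_mem A⟩ : Hgrp n) :
        Equiv.Perm (Pt n)) (1, i))
    = ((if i ∈ A then -1 else 1) * sgn x i * (if prm x i ∈ A then -1 else 1), prm x i) := by
  have hcoe : (((⟨dSet A, dSet_mem A⟩ : Hgrp n)⁻¹ * x.sigma * ⟨dSet A, dSet_mem A⟩ : Hgrp n) :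
      Equiv.Perm (Pt n)) = dSet A * (x.sigma : Equiv.Perm (Pt n)) * dSet A := by
    push_cast
    rw [dSet_inv]
  rw [hcoe]
  simp only [Equiv.Perm.mul_apply]
  rw [dSet_apply]
  by_cases h1 : i ∈ A <;> simp only [h1, if_true, if_false] <;>
    rw [Hgrp_apply x.sigma.2, sigma_apply_one] <;>
    simp only [] <;>
    rw [dSet_apply] <;>
    by_cases h2 : prm x i ∈ A <;>
      rcases Int.units_eq_one_or (sgn x i) with h3 | h3 <;>
        simp [h1, h2, h3]

lemma minusCard_dg (A : Finset (Fin n)) : minusCard (dg A) = A.card := by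
  show (Finset.univ.filter fun i : Fin n => (dSet A (1, i)).1 = -1).card = A.card
  congr 1
  ext i
  simp only [Finset.mem_filter, Finset.mem_univ, true_and, dSet_apply]
  by_cases h : i ∈ A <;> simp [h]

lemma sumV_dg (A : Finset (Fin n)) : sumV (dg A) = 0 := by
  show ∑ _i : Fin n, (0 : ℤ) = 0
  simp

lemma Pg_dg (A : Finset (Fin n)) : Pg (dg A) := by
  intro x hx
  have hconj : (dg A)⁻¹ * x * dg A
      = ⟨(⟨dSet A, dSet_mem A⟩ : Hgrp n)⁻¹ * x.sigma * ⟨dSet A, dSet_mem A⟩,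
          actV (dSet A) x.vec⟩ := conj_zero _ x
  set y : WC n := ⟨(⟨dSet A, dSet_mem A⟩ : Hgrp n)⁻¹ * x.sigma * ⟨dSet A, dSet_mem A⟩,
    actV (dSet A) x.vec⟩ with hy
  have hkey := fun i => Prod.ext_iff.mp (dg_sigma_apply A x i)
  have hprm : ∀ i, prm y i = prm x i := fun i => (hkey i).2
  have hsgn : ∀ i, sgn y i
      = (if i ∈ A then -1 else 1) * sgn x i * (if prm x i ∈ A then -1 else 1) :=
    fun i => (hkey i).1
  have htrv : trv y = trv x := by
    ext i
    simp only [trv, Finset.mem_filter, Finset.mem_univ, true_and]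
    rw [hprm i]
  have hGood : Good ((dg A)⁻¹ * x * dg A) := by
    refine ⟨conj_sq hx.sq _, ?_⟩
    rw [hconj]
    intro i
    rw [hprm i]
    exact hx.fpf i
  refine ⟨hGood, ?_, ?_⟩
  · rw [hconj, minusCard_dg]
    rw [Nv_eq_sum, htrv]
    have hpt : ∀ i ∈ trv x, (if sgn y i = -1 then (1 : ZMod 2) else 0)
        = (if sgn x i = -1 then (1 : ZMod 2) else 0)
          + ((if i ∈ A then 1 else 0) + (if prm x i ∈ A then 1 else 0)) := by
      intro i _
      rw [hsgn i]
      exact ite_sgn_flip _ _ _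
    rw [Finset.sum_congr rfl hpt, Finset.sum_add_distrib,
      sum_trv_prm hx (fun i => if i ∈ A then (1 : ZMod 2) else 0), sum_ind_card]
    rw [Nv_eq_sum]
  · rw [hconj, sumV_dg]
    have hOv : Ov y = ∑ i ∈ trv x, ((actV (dSet A) x.vec i : ℤ) : ZMod 2) := by
      unfold Ov
      rw [htrv]
    rw [hOv]
    have hpt : ∀ i ∈ trv x, ((actV (dSet A) x.vec i : ℤ) : ZMod 2)
        = ((x.vec i : ℤ) : ZMod 2) := by
      intro i _
      have h1 : actV (dSet A) x.vec i
          = (((dSet A (1, i)).1 : ℤˣ) : ℤ) * x.vec (dSet A (1, i)).2 := rfl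
      rw [h1]
      push_cast
      rw [unitsCast_zmod2, one_mul, dSet_apply]
    rw [Finset.sum_congr rfl hpt]
    show Ov x = Ov x + (((0 : ℤ)) : ZMod 2)
    simp

end Dev4b
section Dev4c

variable {n : ℕ}

lemma lpg_sigma_apply (π : Equiv.Perm (Fin n)) (x : WC n) (i : Fin n) :
    (((⟨LP π, LP_mem π⟩ : Hgrp n)⁻¹ * x.sigma * ⟨LP π, LP_mem π⟩ : Hgrp n) :
        Equiv.Perm (Pt n)) (1, i)
    = (sgn x (π i), π⁻¹ (prm x (π i))) := rfl

lemma sgn_lpg (π : Equiv.Perm (Fin n)) (i : Fin n) : sgn (lpg π) i = 1 := rfl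

lemma sumV_lpg (π : Equiv.Perm (Fin n)) : sumV (lpg π) = 0 := by
  show ∑ _i : Fin n, (0 : ℤ) = 0
  simp

lemma Pg_lpg (π : Equiv.Perm (Fin n)) : Pg (lpg π) := by
  intro x hx
  have hconj : (lpg π)⁻¹ * x * lpg π
      = ⟨(⟨LP π, LP_mem π⟩ : Hgrp n)⁻¹ * x.sigma * ⟨LP π, LP_mem π⟩,
          actV (LP π) x.vec⟩ := conj_zero _ x
  set y : WC n := ⟨(⟨LP π, LP_mem π⟩ : Hgrp n)⁻¹ * x.sigma * ⟨LP π, LP_mem π⟩,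
    actV (LP π) x.vec⟩ with hy
  have hkey := fun i => Prod.ext_iff.mp (lpg_sigma_apply π x i)
  have hprm : ∀ i, prm y i = π⁻¹ (prm x (π i)) := fun i => (hkey i).2
  have hsgn : ∀ i, sgn y i = sgn x (π i) := fun i => (hkey i).1
  have hvec : ∀ i, y.vec i = x.vec (π i) := by
    intro i
    show (((1 : ℤˣ) : ℤ)) * x.vec (π i) = x.vec (π i)
    rw [Units.val_one, one_mul]
  have hGoody : Good y := by
    rw [← hconj]
    refine ⟨conj_sq hx.sq _, ?_⟩
    rw [hconj]
    intro i hci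
    rw [hprm i] at hci
    have : prm x (π i) = π i := by
      have := congrArg π hci
      rwa [(show ∀ z, π (π⁻¹ z) = z from fun z => π.apply_symm_apply z)] at this
    exact hx.fpf (π i) this
  have hGood : Good ((lpg π)⁻¹ * x * lpg π) := by rw [hconj]; exact hGoody
  have hmem : ∀ j, j ∈ (trv y).image π ↔ π⁻¹ j ∈ trv y := by
    intro j
    constructor
    · intro hj
      obtain ⟨i, hi, rfl⟩ := Finset.mem_image.mp hj
      rwa [(show ∀ z, π⁻¹ (π z) = z from fun z => π.symm_apply_apply z)]
    · intro hj
      exact Finset.mem_image.mpr ⟨π⁻¹ j, hj, Equiv.apply_symm_apply π j⟩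
  have hR' : ∀ j, j ∈ (trv y).image π ↔ prm x j ∉ (trv y).image π := by
    intro j
    rw [hmem j, hmem (prm x j), mem_trv_iff hGoody (π⁻¹ j)]
    rw [hprm (π⁻¹ j), (show ∀ z, π (π⁻¹ z) = z from fun z => π.apply_symm_apply z)]
  have himg : ∀ (w : Fin n → ZMod 2), (∀ i, w (prm x i) = w i) →
      ∑ i ∈ trv y, w (π i) = ∑ i ∈ trv x, w i := by
    intro w hw
    have h1 : ∑ i ∈ trv y, w (π i) = ∑ j ∈ (trv y).image π, w j :=
      (Finset.sum_image (fun a _ b _ hab => π.injective hab)).symm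
    rw [h1]
    exact sum_transversal (prm x) w hw (trv x) ((trv y).image π)
      (mem_trv_iff hx) hR' hx.prm_prm
  refine ⟨hGood, ?_, ?_⟩
  · rw [hconj, minusCard_sigma (sgn_lpg π)]
    rw [Nv_eq_sum]
    have hpt : ∀ i ∈ trv y, (if sgn y i = -1 then (1 : ZMod 2) else 0)
        = (if sgn x (π i) = -1 then (1 : ZMod 2) else 0) := by
      intro i _; rw [hsgn i]
    rw [Finset.sum_congr rfl hpt,
      himg (fun j => if sgn x j = -1 then (1 : ZMod 2) else 0)
        (fun i => by simp only [hx.sgn_prm i]),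
      ← Nv_eq_sum]
    simp
  · rw [hconj, sumV_lpg]
    have hOv : Ov y = ∑ i ∈ trv y, ((x.vec (π i) : ℤ) : ZMod 2) := by
      unfold Ov
      exact Finset.sum_congr rfl (fun i _ => by rw [hvec i])
    rw [hOv, himg (fun j => ((x.vec j : ℤ) : ZMod 2)) (fun i => by simp only [hx.vec_prm_parity i])]
    show Ov x = Ov x + (((0 : ℤ)) : ZMod 2)
    simp

end Dev4c
section Dev5

variable {n : ℕ}

lemma sigma_decomp (σ : Hgrp n) :
    (σ : Equiv.Perm (Pt n)) = LP (permOf σ)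
      * dSet (Finset.univ.filter fun k : Fin n =>
          ((σ : Equiv.Perm (Pt n)) (1, k)).1 = -1) := by
  apply Equiv.ext
  intro p
  obtain ⟨δ, i⟩ := p
  rw [Equiv.Perm.mul_apply, dSet_apply, Hgrp_apply σ.2]
  show ((δ * ((σ : Equiv.Perm (Pt n)) (1, i)).1 : ℤˣ), ((σ : Equiv.Perm (Pt n)) (1, i)).2)
      = LP (permOf σ) _
  rcases Int.units_eq_one_or ((σ : Equiv.Perm (Pt n)) (1, i)).1 with h | h <;>
    simp [h, LP, permOf_apply]

lemma WC_decomp (g : WC n) :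
    g = lpg (permOf g.sigma)
        * dg (Finset.univ.filter fun k : Fin n => sgn g k = -1) * trg g.vec := by
  have h1 : lpg (permOf g.sigma)
      * dg (Finset.univ.filter fun k : Fin n => sgn g k = -1)
      = (⟨g.sigma, 0⟩ : WC n) := by
    unfold lpg dg
    rw [mk_mul_mk_zero]
    congr 1
    refine Subtype.ext ?_
    rw [Subgroup.coe_mul]
    exact (sigma_decomp g.sigma).symm
  rw [h1]
  symm
  refine WC.ext ?_ ?_
  · show g.sigma * 1 = g.sigma
    rw [mul_one]
  · show actV ((1 : Hgrp n) : Equiv.Perm (Pt n)) 0 + g.vec = g.vec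
    have : ((1 : Hgrp n) : Equiv.Perm (Pt n)) = 1 := rfl
    rw [this, actV_zero, zero_add]

lemma Pg_all (g : WC n) : Pg g := by
  have hdec := WC_decomp g
  rw [hdec]
  exact Pg_mul (Pg_mul (Pg_lpg _) (Pg_dg _)) (Pg_trg _)

lemma WD_minus_sum {g : WC n} (hg : g ∈ WD n) :
    ((sumV g : ℤ) : ZMod 2) = 0 ∧ ((minusCard g : ℕ) : ZMod 2) = 0 := by
  obtain ⟨h1, h2⟩ := Subgroup.mem_inf.mp hg
  have hs : ((sumV g : ℤ) : ZMod 2) = 0 := even_int_iff_zmod.mp h1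
  refine ⟨hs, ?_⟩
  have h3 := intModEq_two_iff.mp h2
  rw [hs] at h3
  have : (((minusCard g : ℕ) : ℤ) : ZMod 2) = ((minusCard g : ℕ) : ZMod 2) := by push_cast; rfl
  rw [this] at h3
  exact h3.symm

lemma mem_WD_of {g : WC n} (h1 : ((sumV g : ℤ) : ZMod 2) = 0)
    (h2 : ((minusCard g : ℕ) : ZMod 2) = 0) : g ∈ WD n := by
  refine Subgroup.mem_inf.mpr ⟨?_, ?_⟩
  · exact even_int_iff_zmod.mpr h1
  · refine intModEq_two_iff.mpr ?_
    rw [h1]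
    have : (((minusCard g : ℕ) : ℤ) : ZMod 2) = ((minusCard g : ℕ) : ZMod 2) := by push_cast; rfl
    rw [this, h2]

lemma good_of {m : ℕ} (hnm : n = 2 * m) {x : WC n} (h2x : orderOf x = 2)
    (hlx : lct x = (m, 0, 0, 0)) : Good x := by
  constructor
  · have := pow_orderOf_eq_one x
    rw [h2x, pow_two] at this
    exact this
  · intro i hfix
    have hl := hlx
    unfold lct at hl
    rw [Prod.ext_iff] at hl
    obtain ⟨_, hl2⟩ := hl
    rw [Prod.ext_iff] at hl2
    obtain ⟨hke, hl3⟩ := hl2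
    rw [Prod.ext_iff] at hl3
    obtain ⟨hko, hl4⟩ := hl3
    simp only at hke hko hl4
    rcases Int.units_eq_one_or (sgn x i) with hs | hs
    · have : i ∈ Finset.univ.filter (fun i : Fin n =>
          (x.sigma : Equiv.Perm (Pt n)) (1, i) = (1, i)) := by
        rw [Finset.mem_filter]
        exact ⟨Finset.mem_univ _, by rw [sigma_apply_one, hs, hfix]⟩
      rw [Finset.card_eq_zero.mp hl4] at this
      exact absurd this (Finset.notMem_empty i)
    · rcases Int.even_or_odd (x.vec i) with hpar | hpar
      · have : i ∈ Finset.univ.filter (fun i : Fin n =>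
            (x.sigma : Equiv.Perm (Pt n)) (1, i) = (-1, i) ∧ Even (x.vec i)) := by
          rw [Finset.mem_filter]
          exact ⟨Finset.mem_univ _, by rw [sigma_apply_one, hs, hfix]; exact ⟨rfl, hpar⟩⟩
        rw [Finset.card_eq_zero.mp hke] at this
        exact absurd this (Finset.notMem_empty i)
      · have : i ∈ Finset.univ.filter (fun i : Fin n =>
            (x.sigma : Equiv.Perm (Pt n)) (1, i) = (-1, i) ∧ Odd (x.vec i)) := by
          rw [Finset.mem_filter]
          exact ⟨Finset.mem_univ _, by rw [sigma_apply_one, hs, hfix]; exact ⟨rfl, hpar⟩⟩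
        rw [Finset.card_eq_zero.mp hko] at this
        exact absurd this (Finset.notMem_empty i)

lemma good_to {m : ℕ} (hnm : n = 2 * m) (hn : 4 ≤ n) {x : WC n} (hG : Good x) :
    orderOf x = 2 ∧ lct x = (m, 0, 0, 0) := by
  constructor
  · refine orderOf_eq_prime ?_ ?_
    · rw [pow_two]; exact hG.sq
    · intro hone
      have h0 : (0 : ℕ) < n := by omega
      have := hG.fpf ⟨0, h0⟩
      rw [hone] at this
      exact this rfl
  · unfold lct
    have hfilter1 : (Finset.univ.filter fun i : Fin n =>
        ((x.sigma : Equiv.Perm (Pt n)) (1, i)).2 ≠ i) = Finset.univ := by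
      rw [Finset.filter_eq_self]
      intro i _
      exact hG.fpf i
    have hfilter2 : (Finset.univ.filter fun i : Fin n =>
        (x.sigma : Equiv.Perm (Pt n)) (1, i) = (-1, i) ∧ Even (x.vec i)) = ∅ := by
      rw [Finset.filter_eq_empty_iff]
      intro i _ hc
      exact hG.fpf i (congrArg Prod.snd hc.1)
    have hfilter3 : (Finset.univ.filter fun i : Fin n =>
        (x.sigma : Equiv.Perm (Pt n)) (1, i) = (-1, i) ∧ Odd (x.vec i)) = ∅ := by
      rw [Finset.filter_eq_empty_iff]
      intro i _ hc
      exact hG.fpf i (congrArg Prod.snd hc.1)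
    have hfilter4 : (Finset.univ.filter fun i : Fin n =>
        (x.sigma : Equiv.Perm (Pt n)) (1, i) = (1, i)) = ∅ := by
      rw [Finset.filter_eq_empty_iff]
      intro i _ hc
      exact hG.fpf i (congrArg Prod.snd hc)
    rw [hfilter1, hfilter2, hfilter3, hfilter4]
    simp only [Finset.card_univ, Fintype.card_fin, Finset.card_empty]
    rw [hnm]
    norm_num

lemma minus_mod4_iff {x y : WC n} (hx : Good x) (hy : Good y) :
    (minusCard x ≡ minusCard y [MOD 4]) ↔ Nv x = Nv y := by
  rw [minusCard_eq_two_mul hx, minusCard_eq_two_mul hy]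
  unfold Nv
  rw [ZMod.natCast_eq_natCast_iff]
  unfold Nat.ModEq
  constructor <;> intro h <;> omega

lemma fval_mod4_iff {x y : WC n} (hx : Good x) (hy : Good y) :
    (fval x ≡ fval y [ZMOD 4]) ↔ Ov x = Ov y := by
  rw [fval_eq_two_mul hx, fval_eq_two_mul hy, Ov_eq_cast_Sv, Ov_eq_cast_Sv,
    ← intModEq_two_iff]
  unfold Int.ModEq
  constructor <;> intro h <;> omega

end Dev5
section Dev6

variable {n : ℕ}

lemma good_reduce {x : WC n} (hx : Good x) :
    ∃ (g : WC n) (π : Equiv.Perm (Fin n)), (∀ i, π (π i) = i) ∧ (∀ i, π i ≠ i) ∧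
      g⁻¹ * x * g = lpg π := by
  set A := negSet x with hA
  set x₂ := (dg A)⁻¹ * x * dg A with hx2
  have hconj : x₂ = ⟨(⟨dSet A, dSet_mem A⟩ : Hgrp n)⁻¹ * x.sigma * ⟨dSet A, dSet_mem A⟩,
      actV (dSet A) x.vec⟩ := conj_zero _ x
  have hkey := fun i => Prod.ext_iff.mp (dg_sigma_apply A x i)
  have hprm2 : ∀ i, prm x₂ i = prm x i := by
    intro i; rw [hconj]; exact (hkey i).2
  have hsgn2 : ∀ i, sgn x₂ i
      = (if i ∈ A then -1 else 1) * sgn x i * (if prm x i ∈ A then -1 else 1) := by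
    intro i; rw [hconj]; exact (hkey i).1
  have hGood2 : Good x₂ := (Pg_dg A x hx).1
  have hall : ∀ i, sgn x₂ i = 1 := by
    intro i
    rw [hsgn2 i]
    by_cases hi : i ∈ trv x
    · by_cases hs : sgn x i = -1
      · have hiA : i ∈ A := Finset.mem_filter.mpr ⟨hi, hs⟩
        have hpA : prm x i ∉ A := by
          intro hc
          exact (mem_trv_iff hx i).mp hi (Finset.mem_of_mem_filter _ hc)
        rw [if_pos hiA, if_neg hpA, hs]
        decide
      · have hs1 : sgn x i = 1 := by
          rcases Int.units_eq_one_or (sgn x i) with h | h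
          · exact h
          · exact absurd h hs
        have hiA : i ∉ A := fun hc => hs (Finset.mem_filter.mp hc).2
        have hpA : prm x i ∉ A := by
          intro hc
          have h2 := (Finset.mem_filter.mp hc).2
          rw [hx.sgn_prm i, hs1] at h2
          exact absurd h2 (by decide)
        rw [if_neg hiA, if_neg hpA, hs1]
        decide
    · have hpi : prm x i ∈ trv x := by
        by_contra hc
        exact hc ((mem_trv_iff hx (prm x i)).mpr (by rw [hx.prm_prm i]; exact hi))
      have hiA : i ∉ A := fun hc => hi (Finset.mem_of_mem_filter _ hc)
      by_cases hs : sgn x i = -1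
      · have hpA : prm x i ∈ A :=
          Finset.mem_filter.mpr ⟨hpi, by rw [hx.sgn_prm i]; exact hs⟩
        rw [if_neg hiA, if_pos hpA, hs]
        decide
      · have hs1 : sgn x i = 1 := by
          rcases Int.units_eq_one_or (sgn x i) with h | h
          · exact h
          · exact absurd h hs
        have hpA : prm x i ∉ A := by
          intro hc
          have h2 := (Finset.mem_filter.mp hc).2
          rw [hx.sgn_prm i, hs1] at h2
          exact absurd h2 (by decide)
        rw [if_neg hiA, if_neg hpA, hs1]
        decide
  set u : Fin n → ℤ := fun j => if j < prm x₂ j then 0 else x₂.vec (prm x₂ j) with hu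
  refine ⟨dg A * trg u, prm x₂, hGood2.prm_prm, hGood2.fpf, ?_⟩
  have e : (dg A * trg u)⁻¹ * x * (dg A * trg u) = (trg u)⁻¹ * x₂ * trg u := by
    rw [hx2]; group
  rw [e, conj_trg]
  refine WC.ext ?_ ?_
  · refine Subtype.ext ?_
    apply Equiv.ext
    intro p
    obtain ⟨δ, i⟩ := p
    rw [Hgrp_apply x₂.sigma.2]
    have h1 : ((x₂.sigma : Equiv.Perm (Pt n)) (1, i)).1 = 1 := hall i
    rw [h1, mul_one]
    rfl
  · funext j
    have hact : actV (x₂.sigma : Equiv.Perm (Pt n)) u j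
        = ((sgn x₂ j : ℤˣ) : ℤ) * u (prm x₂ j) := rfl
    show x₂.vec j + u j - actV (x₂.sigma : Equiv.Perm (Pt n)) u j = 0
    rw [hact, hall j, Units.val_one, one_mul]
    by_cases hj : j < prm x₂ j
    · have h2 : ¬ (prm x₂ j < prm x₂ (prm x₂ j)) := by
        rw [hGood2.prm_prm j]
        exact fun hc => absurd (lt_trans hj hc) (lt_irrefl _)
      simp only [hu, if_pos hj, if_neg h2]
      rw [hGood2.prm_prm j]
      ring
    · have hvpr : x₂.vec (prm x₂ j) = - x₂.vec j := by
        have h4 := hGood2.vec_prm j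
        rw [hall j, Units.val_one, one_mul] at h4
        exact h4
      have h3 : prm x₂ j < prm x₂ (prm x₂ j) := by
        rw [hGood2.prm_prm j]
        rcases lt_trichotomy (prm x₂ j) j with h | h | h
        · exact h
        · exact absurd h (hGood2.fpf j)
        · exact absurd h hj
      simp only [hu, if_neg hj, if_pos h3]
      rw [hvpr]
      ring

end Dev6
section Dev7

variable {n : ℕ}

lemma mem_tset_iff (π : Equiv.Perm (Fin n)) (hπ2 : ∀ i, π (π i) = i)
    (hπf : ∀ i, π i ≠ i) (i : Fin n) :
    i ∈ Finset.univ.filter (fun j : Fin n => j < π j)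
      ↔ π i ∉ Finset.univ.filter (fun j : Fin n => j < π j) := by
  simp only [Finset.mem_filter, Finset.mem_univ, true_and, hπ2 i]
  constructor
  · intro h1 h2; exact absurd (lt_trans h1 h2) (lt_irrefl i)
  · intro h1
    rcases lt_trichotomy i (π i) with h2 | h2 | h2
    · exact h2
    · exact absurd h2.symm (hπf i)
    · exact absurd h2 h1

lemma tset_card (π : Equiv.Perm (Fin n)) (hπ2 : ∀ i, π (π i) = i)
    (hπf : ∀ i, π i ≠ i) :
    2 * (Finset.univ.filter (fun j : Fin n => j < π j)).card = n := by
  have h1 := Finset.card_filter_add_card_filter_not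
    (s := (Finset.univ : Finset (Fin n))) (p := fun j => j < π j)
  have h2 : (Finset.univ.filter (fun j : Fin n => ¬ j < π j)).card
      = (Finset.univ.filter (fun j : Fin n => j < π j)).card := by
    refine Finset.card_bij' (fun i _ => π i) (fun i _ => π i) ?_ ?_ ?_ ?_
    · intro a ha
      rw [Finset.mem_filter] at ha ⊢
      refine ⟨Finset.mem_univ _, ?_⟩
      rw [hπ2 a]
      rcases lt_trichotomy (π a) a with h | h | h
      · exact h
      · exact absurd h (hπf a)
      · exact absurd h ha.2
    · intro a ha
      rw [Finset.mem_filter] at ha ⊢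
      refine ⟨Finset.mem_univ _, ?_⟩
      rw [hπ2 a]
      exact fun hc => absurd (lt_trans ha.2 hc) (lt_irrefl _)
    · intro a _; exact hπ2 a
    · intro a _; exact hπ2 a
  rw [h2] at h1
  have h3 : (Finset.univ : Finset (Fin n)).card = n := by
    rw [Finset.card_univ, Fintype.card_fin]
  omega

lemma perm_match (π ρ : Equiv.Perm (Fin n)) (hπ2 : ∀ i, π (π i) = i)
    (hπf : ∀ i, π i ≠ i) (hρ2 : ∀ i, ρ (ρ i) = i) (hρf : ∀ i, ρ i ≠ i) :
    ∃ g : WC n, g⁻¹ * lpg π * g = lpg ρ := by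
  set Rπ := Finset.univ.filter (fun j : Fin n => j < π j) with hRπ
  set Rρ := Finset.univ.filter (fun j : Fin n => j < ρ j) with hRρ
  have hcard : Rρ.card = Rπ.card := by
    have h1 := tset_card π hπ2 hπf
    have h2 := tset_card ρ hρ2 hρf
    rw [hRπ, hRρ]
    omega
  set e := Finset.equivOfCardEq hcard with he
  have hmem : ∀ i, i ∉ Rρ → ρ i ∈ Rρ := by
    intro i hi
    exact (mem_tset_iff ρ hρ2 hρf (ρ i)).mpr (by rw [hρ2 i]; exact hi)
  set f : Fin n → Fin n :=
    fun i => if h : i ∈ Rρ then (e ⟨i, h⟩ : Fin n) else π (e ⟨ρ i, hmem i h⟩) with hf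
  have hfR : ∀ (i : Fin n) (h : i ∈ Rρ), f i = (e ⟨i, h⟩ : Fin n) :=
    fun i h => dif_pos h
  have hfN : ∀ (i : Fin n) (h : i ∉ Rρ), f i = π (e ⟨ρ i, hmem i h⟩) :=
    fun i h => dif_neg h
  have hπout : ∀ s : {z // z ∈ Rρ}, π (e s : Fin n) ∉ Rπ :=
    fun s => (mem_tset_iff π hπ2 hπf _).mp (e s).2
  have hinj : Function.Injective f := by
    intro i j hij
    by_cases hi : i ∈ Rρ <;> by_cases hj : j ∈ Rρ
    · rw [hfR i hi, hfR j hj] at hij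
      have := e.injective (Subtype.coe_injective hij)
      exact congrArg Subtype.val this
    · rw [hfR i hi, hfN j hj] at hij
      have h1 := (e ⟨i, hi⟩).2
      rw [hij] at h1
      exact absurd h1 (hπout _)
    · rw [hfN i hi, hfR j hj] at hij
      have h1 := (e ⟨j, hj⟩).2
      rw [← hij] at h1
      exact absurd h1 (hπout _)
    · rw [hfN i hi, hfN j hj] at hij
      have h1 := e.injective (Subtype.coe_injective (π.injective hij))
      have h2 : ρ i = ρ j := congrArg Subtype.val h1
      exact ρ.injective h2
  have hbij : Function.Bijective f := Finite.injective_iff_bijective.mp hinj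
  set fe : Equiv.Perm (Fin n) := Equiv.ofBijective f hbij with hfe
  have hfe_apply : ∀ i, fe i = f i := fun i => rfl
  have hrel : ∀ i, f (ρ i) = π (f i) := by
    intro i
    by_cases hi : i ∈ Rρ
    · have hni : ρ i ∉ Rρ := (mem_tset_iff ρ hρ2 hρf i).mp hi
      rw [hfN (ρ i) hni, hfR i hi]
      have h1 : (⟨ρ (ρ i), hmem _ hni⟩ : {z // z ∈ Rρ}) = ⟨i, hi⟩ := Subtype.ext (hρ2 i)
      rw [h1]
    · rw [hfR (ρ i) (hmem i hi), hfN i hi, hπ2]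
  have hlpg_inv : (lpg fe)⁻¹ = lpg fe⁻¹ := by
    refine inv_eq_of_mul_eq_one_right ?_
    rw [← lpg_mul, mul_inv_cancel, lpg_one]
  refine ⟨lpg fe, ?_⟩
  rw [hlpg_inv, ← lpg_mul, ← lpg_mul]
  congr 1
  apply Equiv.ext
  intro i
  show fe⁻¹ (π (fe i)) = ρ i
  rw [hfe_apply i, ← hrel i]
  show fe⁻¹ (fe (ρ i)) = ρ i
  rw [(show ∀ z, fe⁻¹ (fe z) = z from fun z => fe.symm_apply_apply z)]

lemma good_conj {x y : WC n} (hx : Good x) (hy : Good y) :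
    ∃ g : WC n, g⁻¹ * x * g = y := by
  obtain ⟨g1, π, hπ2, hπf, h1⟩ := good_reduce hx
  obtain ⟨g2, ρ, hρ2, hρf, h2⟩ := good_reduce hy
  obtain ⟨g3, h3⟩ := perm_match π ρ hπ2 hπf hρ2 hρf
  refine ⟨g1 * g3 * g2⁻¹, ?_⟩
  have e : (g1 * g3 * g2⁻¹)⁻¹ * x * (g1 * g3 * g2⁻¹)
      = g2⁻¹⁻¹ * (g3⁻¹ * (g1⁻¹ * x * g1) * g3) * g2⁻¹ := by group
  rw [e, h1, h3, inv_inv, ← h2]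
  group

lemma good_conj_iff {x y : WC n} (hx : Good x) (hy : Good y) :
    (∃ g ∈ WD n, g⁻¹ * x * g = y) ↔ (Nv x = Nv y ∧ Ov x = Ov y) := by
  constructor
  · rintro ⟨g, hg, hconj⟩
    obtain ⟨_, hN, hO⟩ := Pg_all g x hx
    rw [hconj] at hN hO
    obtain ⟨hs, hm⟩ := WD_minus_sum hg
    rw [hm] at hN
    rw [hs] at hO
    refine ⟨?_, ?_⟩
    · rw [hN, add_zero]
    · rw [hO, add_zero]
  · rintro ⟨hN, hO⟩
    obtain ⟨g, hconj⟩ := good_conj hx hy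
    obtain ⟨_, hN2, hO2⟩ := Pg_all g x hx
    rw [hconj] at hN2 hO2
    have hm : ((minusCard g : ℕ) : ZMod 2) = 0 := by
      rw [← hN] at hN2
      exact left_eq_add.mp hN2
    have hs : ((sumV g : ℤ) : ZMod 2) = 0 := by
      rw [← hO] at hO2
      exact left_eq_add.mp hO2
    exact ⟨g, mem_WD_of hs hm, hconj⟩

end Dev7
section Dev8

variable {n : ℕ}

lemma class_self {M : Type*} [Group M] (G : Subgroup M) (z : M) :
    z ∈ ConjugacyClassOf G z := ⟨1, G.one_mem, by simp⟩

lemma class_eq {M : Type*} [Group M] {G : Subgroup M} {z w : M}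
    (h : ∃ g ∈ G, g⁻¹ * z * g = w) :
    ConjugacyClassOf G z = ConjugacyClassOf G w := by
  obtain ⟨g, hg, hzw⟩ := h
  ext u
  constructor
  · rintro ⟨h1, hh1, rfl⟩
    exact ⟨g⁻¹ * h1, mul_mem (inv_mem hg) hh1, by rw [← hzw]; group⟩
  · rintro ⟨h1, hh1, rfl⟩
    exact ⟨g * h1, mul_mem hg hh1, by rw [← hzw]; group⟩

end Dev8
theorem WD_four_classes (n m : ℕ) (hnm : n = 2 * m) (hn : 4 ≤ n)
    (x y : WC n) (hx : x ∈ WD n) (hy : y ∈ WD n)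
    (h2x : orderOf x = 2) (h2y : orderOf y = 2)
    (hlx : lct x = (m, 0, 0, 0)) (hly : lct y = (m, 0, 0, 0)) :
    ((∃ g ∈ WD n, g⁻¹ * x * g = y) ↔
      (minusCard x ≡ minusCard y [MOD 4] ∧ fval x ≡ fval y [ZMOD 4])) ∧
    {X : Set (WC n) | ∃ z ∈ (WD n : Set (WC n)), orderOf z = 2 ∧ lct z = (m, 0, 0, 0) ∧
        X = ConjugacyClassOf (WD n) z}.ncard = 4 := by
  have hGx : Good x := good_of hnm h2x hlx
  have hGy : Good y := good_of hnm h2y hly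
  constructor
  · rw [good_conj_iff hGx hGy, minus_mod4_iff hGx hGy, fval_mod4_iff hGx hGy]
  · have h0n : 0 < n := by omega
    set i0 : Fin n := ⟨0, h0n⟩ with hi0
    set t1 : WC n := dg {i0} with ht1
    set t2 : WC n := trg (Pi.single i0 1) with ht2
    have hmc1 : ((minusCard t1 : ℕ) : ZMod 2) = 1 := by
      rw [ht1, minusCard_dg, Finset.card_singleton, Nat.cast_one]
    have hsv1 : ((sumV t1 : ℤ) : ZMod 2) = 0 := by
      rw [ht1, sumV_dg, Int.cast_zero]
    have hmc2 : ((minusCard t2 : ℕ) : ZMod 2) = 0 := by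
      rw [ht2, minusCard_sigma (sgn_trg _), Nat.cast_zero]
    have hsv2 : ((sumV t2 : ℤ) : ZMod 2) = 1 := by
      rw [ht2]
      have h1 : sumV (trg (Pi.single i0 1)) = ∑ i : Fin n, Pi.single i0 (1 : ℤ) i := rfl
      rw [h1, Finset.sum_pi_single', if_pos (Finset.mem_univ i0), Int.cast_one]
    obtain ⟨hG10, hN10, hO10⟩ := Pg_all t1 x hGx
    obtain ⟨hG01, hN01, hO01⟩ := Pg_all t2 x hGx
    obtain ⟨hG11, hN11, hO11⟩ := Pg_all t2 (t1⁻¹ * x * t1) hG10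
    rw [hmc1] at hN10
    rw [hsv1, add_zero] at hO10
    rw [hmc2, add_zero] at hN01
    rw [hsv2] at hO01
    rw [hmc2, add_zero, hN10] at hN11
    rw [hsv2, hO10] at hO11
    set A := ConjugacyClassOf (WD n) x with hA
    set B := ConjugacyClassOf (WD n) (t1⁻¹ * x * t1) with hB
    set C := ConjugacyClassOf (WD n) (t2⁻¹ * x * t2) with hC
    set D := ConjugacyClassOf (WD n) (t2⁻¹ * (t1⁻¹ * x * t1) * t2) with hD
    have hne : ∀ {a b : WC n}, Good a → Good b → ¬(Nv a = Nv b ∧ Ov a = Ov b) →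
        ConjugacyClassOf (WD n) a ≠ ConjugacyClassOf (WD n) b := by
      intro a b hGa hGb hnab heq
      have hb : b ∈ ConjugacyClassOf (WD n) a := heq ▸ class_self (WD n) b
      obtain ⟨g, hg, hconj⟩ := hb
      exact hnab ((good_conj_iff hGa hGb).mp ⟨g, hg, hconj⟩)
    have hplus : ∀ a : ZMod 2, ¬ (a = a + 1) := by decide
    have d1 : A ≠ B := hne hGx hG10 (fun h => hplus _ (h.1.trans hN10))
    have d2 : A ≠ C := hne hGx hG01 (fun h => hplus _ (h.2.trans hO01))
    have d3 : A ≠ D := hne hGx hG11 (fun h => hplus _ (h.1.trans hN11))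
    have d4 : B ≠ C := by
      refine hne hG10 hG01 (fun h => ?_)
      have := hN10.symm.trans (h.1.trans hN01)
      exact hplus _ this.symm
    have d5 : B ≠ D := by
      refine hne hG10 hG11 (fun h => ?_)
      have := hO10.symm.trans (h.2.trans hO11)
      exact hplus _ this
    have d6 : C ≠ D := by
      refine hne hG01 hG11 (fun h => ?_)
      have := hN01.symm.trans (h.1.trans hN11)
      exact hplus _ this
    have hset : {X : Set (WC n) | ∃ z ∈ (WD n : Set (WC n)), orderOf z = 2 ∧
        lct z = (m, 0, 0, 0) ∧ X = ConjugacyClassOf (WD n) z}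
        = {A, B, C, D} := by
      ext X
      simp only [Set.mem_setOf_eq, Set.mem_insert_iff, Set.mem_singleton_iff]
      constructor
      · rintro ⟨z, hzWD, hz2, hzl, rfl⟩
        have hGz : Good z := good_of hnm hz2 hzl
        have hcases : ∀ a b : ZMod 2, a = b ∨ a = b + 1 := by decide
        rcases hcases (Nv z) (Nv x) with hN | hN <;> rcases hcases (Ov z) (Ov x) with hO | hO
        · exact Or.inl (class_eq ((good_conj_iff hGz hGx).mpr ⟨hN, hO⟩))
        · refine Or.inr (Or.inr (Or.inl ?_))
          exact class_eq ((good_conj_iff hGz hG01).mpr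
            ⟨hN.trans hN01.symm, hO.trans hO01.symm⟩)
        · refine Or.inr (Or.inl ?_)
          exact class_eq ((good_conj_iff hGz hG10).mpr
            ⟨hN.trans hN10.symm, hO.trans hO10.symm⟩)
        · refine Or.inr (Or.inr (Or.inr ?_))
          exact class_eq ((good_conj_iff hGz hG11).mpr
            ⟨hN.trans hN11.symm, hO.trans hO11.symm⟩)
      · rintro (rfl | rfl | rfl | rfl)
        · exact ⟨x, hx, h2x, hlx, rfl⟩
        · exact ⟨t1⁻¹ * x * t1, hG10.mem_WD, (good_to hnm hn hG10).1,
            (good_to hnm hn hG10).2, rfl⟩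
        · exact ⟨t2⁻¹ * x * t2, hG01.mem_WD, (good_to hnm hn hG01).1,
            (good_to hnm hn hG01).2, rfl⟩
        · exact ⟨t2⁻¹ * (t1⁻¹ * x * t1) * t2, hG11.mem_WD, (good_to hnm hn hG11).1,
            (good_to hnm hn hG11).2, rfl⟩
    rw [hset]
    have hfin1 : ({D} : Set (Set (WC n))).Finite := Set.finite_singleton D
    have hfin2 : ({C, D} : Set (Set (WC n))).Finite := hfin1.insert C
    have hfin3 : ({B, C, D} : Set (Set (WC n))).Finite := hfin2.insert B
    have hm1 : A ∉ ({B, C, D} : Set (Set (WC n))) := by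
      simp only [Set.mem_insert_iff, Set.mem_singleton_iff]
      push_neg
      exact ⟨d1, d2, d3⟩
    have hm2 : B ∉ ({C, D} : Set (Set (WC n))) := by
      simp only [Set.mem_insert_iff, Set.mem_singleton_iff]
      push_neg
      exact ⟨d4, d5⟩
    have hm3 : C ∉ ({D} : Set (Set (WC n))) := by
      simp only [Set.mem_singleton_iff]
      exact d6
    rw [Set.ncard_insert_of_notMem hm1 hfin3, Set.ncard_insert_of_notMem hm2 hfin2,
      Set.ncard_insert_of_notMem hm3 hfin1, Set.ncard_singleton]
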